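/- Let J be a finite nonempty index set and for each j ∈ J let c_j > 0, m_j > 0, and Δ_j ∈ ℝ, and assume that Δ_{j₀} = 0 for some j₀ ∈ J. Define ν(ξ) = Σ_{j∈J} c_j ∫_{ℝ³} e^{−m_j|ξ*|²/2}·√(|ξ − ξ*|² − 2Δ_j)·1_{|ξ − ξ*|² > 2Δ_j} dξ*. Then there exist positive constants ν₋ and ν₊ with 0 < ν₋ < ν₊ such that ν₋·(1 + |ξ|) ≤ ν(ξ) ≤ ν₊·(1 + |ξ|) for all ξ ∈ ℝ³. -/

import Mathlib

open MeasureTheory Real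

noncomputable section CollisionFreqAux

namespace CollisionFreqAux

local notation "E3" => EuclideanSpace ℝ (Fin 3)

lemma gauss_int {b : ℝ} (hb : 0 < b) :
    Integrable (fun x : E3 => Real.exp (-b * ‖x‖ ^ 2)) := by
  have h := (GaussianFourier.integrable_cexp_neg_mul_sq_norm_add
      (V := E3) (b := (b : ℂ)) (by simpa using hb) 0 0).norm
  refine h.congr (Filter.Eventually.of_forall fun x => ?_)
  simp [Complex.norm_exp]
  left; norm_cast

lemma poly_int {mm : ℝ} (hm : 0 < mm) :
    Integrable (fun x : E3 => Real.exp (-mm * ‖x‖ ^ 2 / 2) * (1 + ‖x‖)) := by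
  set b : ℝ := mm / 2 with hbdef
  have hb : 0 < b := by positivity
  have hb4 : (0:ℝ) < b / 2 := by positivity
  refine ((gauss_int hb4).const_mul (1 + 1 / (2 * b))).mono' ?_ ?_
  · exact ((Real.continuous_exp.comp (by continuity)).mul (by continuity)).aestronglyMeasurable
  · filter_upwards with x
    have hr0 : (0:ℝ) ≤ ‖x‖ := norm_nonneg x
    set r : ℝ := ‖x‖ with hrdef
    rw [Real.norm_eq_abs, abs_of_nonneg (by positivity)]
    have h4 : r ≤ 1 / (2 * b) + b / 2 * r ^ 2 := by
      rw [← sub_nonneg]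
      have : 1 / (2 * b) + b / 2 * r ^ 2 - r = (1 - b * r) ^ 2 / (2 * b) := by
        field_simp; ring
      rw [this]; positivity
    have h1 : b / 2 * r ^ 2 + 1 ≤ Real.exp (b / 2 * r ^ 2) := Real.add_one_le_exp _
    have key : 1 + r ≤ (1 + 1 / (2 * b)) * Real.exp (b / 2 * r ^ 2) := by
      calc 1 + r ≤ 1 + (1 / (2 * b) + b / 2 * r ^ 2) := by linarith
        _ ≤ (1 + 1 / (2 * b)) * (b / 2 * r ^ 2 + 1) := by
            nlinarith [mul_nonneg (by positivity : (0:ℝ) ≤ 1 / (2 * b))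
              (by positivity : (0:ℝ) ≤ b / 2 * r ^ 2)]
        _ ≤ (1 + 1 / (2 * b)) * Real.exp (b / 2 * r ^ 2) := by
            apply mul_le_mul_of_nonneg_left h1 (by positivity)
    calc Real.exp (-mm * r ^ 2 / 2) * (1 + r)
        ≤ Real.exp (-mm * r ^ 2 / 2) * ((1 + 1 / (2 * b)) * Real.exp (b / 2 * r ^ 2)) :=
          mul_le_mul_of_nonneg_left key (Real.exp_nonneg _)
      _ = (1 + 1 / (2 * b)) * Real.exp (-(b / 2) * r ^ 2) := by
          rw [mul_left_comm, ← Real.exp_add]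
          congr 2
          rw [hbdef]; ring

lemma e_int {mm : ℝ} (hm : 0 < mm) :
    Integrable (fun x : E3 => Real.exp (-mm * ‖x‖ ^ 2 / 2)) := by
  have heq : (fun x : E3 => Real.exp (-(mm / 2) * ‖x‖ ^ 2))
      = fun x : E3 => Real.exp (-mm * ‖x‖ ^ 2 / 2) := by
    funext x; congr 1; ring
  rw [← heq]
  exact gauss_int (by positivity)

lemma en_int {mm : ℝ} (hm : 0 < mm) :
    Integrable (fun x : E3 => Real.exp (-mm * ‖x‖ ^ 2 / 2) * ‖x‖) := by
  refine (poly_int hm).mono' ?_ ?_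
  · exact ((Real.continuous_exp.comp (by continuity)).mul continuous_norm).aestronglyMeasurable
  · filter_upwards with x
    rw [Real.norm_eq_abs, abs_of_nonneg (by positivity)]
    have := norm_nonneg x
    nlinarith [Real.exp_nonneg (-mm * ‖x‖ ^ 2 / 2)]

lemma A_pos {mm : ℝ} (hm : 0 < mm) :
    0 < ∫ x : E3, Real.exp (-mm * ‖x‖ ^ 2 / 2) := by
  rw [integral_pos_iff_support_of_nonneg (fun x => (Real.exp_pos _).le) (e_int hm)]
  have hs : Function.support (fun x : E3 => Real.exp (-mm * ‖x‖ ^ 2 / 2)) = Set.univ := by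
    ext x; simp [Function.support, Real.exp_ne_zero]
  rw [hs]
  exact isOpen_univ.measure_pos volume ⟨0, trivial⟩

lemma B_pos {mm : ℝ} (hm : 0 < mm) :
    0 < ∫ x : E3, Real.exp (-mm * ‖x‖ ^ 2 / 2) * ‖x‖ := by
  rw [integral_pos_iff_support_of_nonneg
    (fun x => mul_nonneg (Real.exp_pos _).le (norm_nonneg _)) (en_int hm)]
  have hs : Function.support (fun x : E3 => Real.exp (-mm * ‖x‖ ^ 2 / 2) * ‖x‖)
      = {(0 : E3)}ᶜ := by
    ext x
    simp [Function.support, Real.exp_ne_zero, norm_eq_zero]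
  rw [hs]
  have h1 : volume ({(0:E3)} : Set E3) = 0 := measure_singleton 0
  have h2 : (0:ENNReal) < volume (Set.univ : Set E3) :=
    isOpen_univ.measure_pos volume ⟨0, trivial⟩
  by_contra h
  push_neg at h
  have h3 : volume ({(0:E3)}ᶜ : Set E3) = 0 := le_antisymm h zero_le
  have h4 : volume (Set.univ : Set E3) ≤ volume ({(0:E3)} : Set E3) + volume ({(0:E3)}ᶜ : Set E3) := by
    rw [← Set.union_compl_self ({(0:E3)} : Set E3)]
    exact measure_union_le _ _
  rw [h1, h3] at h4
  simp at h4


lemma upper_est {mm : ℝ} (hm : 0 < mm) (Δr : ℝ) (ξ : E3) :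
    (∫ x : E3, Real.exp (-mm * ‖x‖ ^ 2 / 2) *
        (if 2 * Δr < ‖ξ - x‖ ^ 2 then Real.sqrt (‖ξ - x‖ ^ 2 - 2 * Δr) else 0))
      ≤ (∫ x : E3, Real.exp (-mm * ‖x‖ ^ 2 / 2)) * (‖ξ‖ + Real.sqrt (2 * |Δr|))
        + ∫ x : E3, Real.exp (-mm * ‖x‖ ^ 2 / 2) * ‖x‖ := by
  set D : ℝ := Real.sqrt (2 * |Δr|) with hD
  have hDnn : 0 ≤ D := Real.sqrt_nonneg _
  set f : E3 → ℝ := fun x => Real.exp (-mm * ‖x‖ ^ 2 / 2) *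
      (if 2 * Δr < ‖ξ - x‖ ^ 2 then Real.sqrt (‖ξ - x‖ ^ 2 - 2 * Δr) else 0) with hf
  set g : E3 → ℝ := fun x => Real.exp (-mm * ‖x‖ ^ 2 / 2) * (‖ξ‖ + D + ‖x‖) with hg
  have hgint : Integrable g := by
    have h := ((e_int hm).mul_const (‖ξ‖ + D)).add (en_int hm)
    refine h.congr (Filter.Eventually.of_forall fun x => ?_)
    simp only [Pi.add_apply, hg]; ring
  have hfnn : ∀ x, 0 ≤ f x := by
    intro x
    apply mul_nonneg (Real.exp_nonneg _)
    split
    · exact Real.sqrt_nonneg _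
    · exact le_refl 0
  have hfg : ∀ x, f x ≤ g x := by
    intro x
    simp only [hf, hg]
    by_cases h : 2 * Δr < ‖ξ - x‖ ^ 2
    · rw [if_pos h]
      have hsub : ‖ξ - x‖ ^ 2 - 2 * Δr ≤ ‖ξ - x‖ ^ 2 + 2 * |Δr| := by
        cases abs_cases Δr with
        | inl hh => rw [hh.1]; linarith
        | inr hh => rw [hh.1]; linarith
      have hsplit : Real.sqrt (‖ξ - x‖ ^ 2 + 2 * |Δr|) ≤ ‖ξ - x‖ + D := by
        have h2 : Real.sqrt (‖ξ - x‖ ^ 2 + 2 * |Δr|) = Real.sqrt ((‖ξ - x‖ + D) ^ 2 - ((‖ξ - x‖ + D) ^ 2 - (‖ξ - x‖ ^ 2 + 2 * |Δr|))) := by ring_nf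
        have hDsq : D ^ 2 = 2 * |Δr| := Real.sq_sqrt (by positivity)
        have : Real.sqrt (‖ξ - x‖ ^ 2 + 2 * |Δr|) ≤ Real.sqrt ((‖ξ - x‖ + D) ^ 2) := by
          apply Real.sqrt_le_sqrt
          nlinarith [norm_nonneg (ξ - x), hDnn]
        rwa [Real.sqrt_sq (by positivity)] at this
      have h1 : Real.sqrt (‖ξ - x‖ ^ 2 - 2 * Δr) ≤ ‖ξ - x‖ + D :=
        le_trans (Real.sqrt_le_sqrt hsub) hsplit
      have h2 : ‖ξ - x‖ ≤ ‖ξ‖ + ‖x‖ := norm_sub_le _ _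
      apply mul_le_mul_of_nonneg_left _ (Real.exp_nonneg _)
      linarith
    · rw [if_neg h, mul_zero]
      positivity
  have hfmeas : AEStronglyMeasurable f volume := by
    have hc1 : Continuous fun x : E3 => Real.exp (-mm * ‖x‖ ^ 2 / 2) := by
      apply Real.continuous_exp.comp; continuity
    have hc2 : Continuous fun x : E3 => ‖ξ - x‖ ^ 2 := by continuity
    have hmeas : Measurable f := by
      apply Measurable.mul hc1.measurable
      exact Measurable.ite (measurableSet_lt measurable_const hc2.measurable)
        (Real.continuous_sqrt.comp (hc2.sub continuous_const)).measurable measurable_const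
    exact hmeas.aestronglyMeasurable
  have hfint : Integrable f := by
    refine hgint.mono' hfmeas (Filter.Eventually.of_forall fun x => ?_)
    rw [Real.norm_eq_abs, abs_of_nonneg (hfnn x)]
    exact hfg x
  calc ∫ x : E3, f x ≤ ∫ x : E3, g x := integral_mono hfint hgint hfg
    _ = (∫ x : E3, Real.exp (-mm * ‖x‖ ^ 2 / 2)) * (‖ξ‖ + D)
        + ∫ x : E3, Real.exp (-mm * ‖x‖ ^ 2 / 2) * ‖x‖ := by
      have : g = fun x : E3 => Real.exp (-mm * ‖x‖ ^ 2 / 2) * (‖ξ‖ + D)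
          + Real.exp (-mm * ‖x‖ ^ 2 / 2) * ‖x‖ := by
        funext x; simp only [hg]; ring
      rw [this, integral_add ((e_int hm).mul_const _) (en_int hm), integral_mul_const]

lemma lower_est {mm : ℝ} (hm : 0 < mm) (ξ : E3) :
    (∫ x : E3, Real.exp (-mm * ‖x‖ ^ 2 / 2)) * ‖ξ‖
        + (∫ x : E3, Real.exp (-mm * ‖x‖ ^ 2 / 2) * ‖x‖)
      ≤ 2 * ∫ x : E3, Real.exp (-mm * ‖x‖ ^ 2 / 2) * ‖ξ - x‖ := by
  set u : E3 → ℝ := fun x => Real.exp (-mm * ‖x‖ ^ 2 / 2) * ‖ξ - x‖ with hu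
  set v : E3 → ℝ := fun x => Real.exp (-mm * ‖x‖ ^ 2 / 2) * ‖ξ + x‖ with hv
  have hw : Integrable (fun x : E3 => Real.exp (-mm * ‖x‖ ^ 2 / 2) * (‖ξ‖ + ‖x‖)) := by
    have h := ((e_int hm).mul_const ‖ξ‖).add (en_int hm)
    refine h.congr (Filter.Eventually.of_forall fun x => ?_)
    simp only [Pi.add_apply]; ring
  have hc1 : Continuous fun x : E3 => Real.exp (-mm * ‖x‖ ^ 2 / 2) := by
    apply Real.continuous_exp.comp; continuity
  have hu_int : Integrable u := by
    refine hw.mono' ((hc1.mul (by continuity)).aestronglyMeasurable) ?_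
    filter_upwards with x
    rw [Real.norm_eq_abs, abs_of_nonneg (by positivity)]
    exact mul_le_mul_of_nonneg_left (norm_sub_le _ _) (Real.exp_nonneg _)
  have hv_int : Integrable v := by
    refine hw.mono' ((hc1.mul (by continuity)).aestronglyMeasurable) ?_
    filter_upwards with x
    rw [Real.norm_eq_abs, abs_of_nonneg (by positivity)]
    exact mul_le_mul_of_nonneg_left (norm_add_le _ _) (Real.exp_nonneg _)
  have hneg : ∫ x : E3, v x = ∫ x : E3, u x := by
    calc ∫ x : E3, v x = ∫ x : E3, u (-x) := by
          congr 1; funext x; simp only [hu, hv, norm_neg, sub_neg_eq_add]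
      _ = ∫ x : E3, u x := integral_neg_eq_self _ _
  have hpt : ∀ x : E3, Real.exp (-mm * ‖x‖ ^ 2 / 2) * (‖ξ‖ + ‖x‖) ≤ u x + v x := by
    intro x
    have e1 : (ξ - x) + (ξ + x) = (2:ℝ) • ξ := by module
    have e2 : (ξ + x) - (ξ - x) = (2:ℝ) • x := by module
    have h1 : 2 * ‖ξ‖ ≤ ‖ξ - x‖ + ‖ξ + x‖ := by
      have := norm_add_le (ξ - x) (ξ + x)
      rw [e1, norm_smul] at this
      simpa using this
    have h2 : 2 * ‖x‖ ≤ ‖ξ - x‖ + ‖ξ + x‖ := by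
      have := norm_sub_le (ξ + x) (ξ - x)
      rw [e2, norm_smul] at this
      simpa using this |>.trans (by linarith)
    have h3 : ‖ξ‖ + ‖x‖ ≤ ‖ξ - x‖ + ‖ξ + x‖ := by linarith
    have := mul_le_mul_of_nonneg_left h3 (Real.exp_nonneg (-mm * ‖x‖ ^ 2 / 2))
    simp only [hu, hv]
    nlinarith [this]
  have hmono := integral_mono hw (hu_int.add hv_int) hpt
  simp only [Pi.add_apply] at hmono
  rw [integral_add hu_int hv_int, hneg] at hmono
  have hlhs : ∫ x : E3, Real.exp (-mm * ‖x‖ ^ 2 / 2) * (‖ξ‖ + ‖x‖)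
      = (∫ x : E3, Real.exp (-mm * ‖x‖ ^ 2 / 2)) * ‖ξ‖
        + ∫ x : E3, Real.exp (-mm * ‖x‖ ^ 2 / 2) * ‖x‖ := by
    have : (fun x : E3 => Real.exp (-mm * ‖x‖ ^ 2 / 2) * (‖ξ‖ + ‖x‖))
        = fun x : E3 => Real.exp (-mm * ‖x‖ ^ 2 / 2) * ‖ξ‖
          + Real.exp (-mm * ‖x‖ ^ 2 / 2) * ‖x‖ := by
      funext x; ring
    rw [this, integral_add ((e_int hm).mul_const _) (en_int hm), integral_mul_const]
  rw [hlhs] at hmono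
  linarith


end CollisionFreqAux

end CollisionFreqAux


open CollisionFreqAux

open MeasureTheory

/-- Two-sided bounds on the collision frequency (Theorem 2 of the paper). -/
theorem collision_frequency_two_sided_bounds
    {J : Type*} [Fintype J] [Nonempty J]
    (c m Δ : J → ℝ) (hc : ∀ j, 0 < c j) (hm : ∀ j, 0 < m j)
    (hΔ0 : ∃ j₀, Δ j₀ = 0)
    (ν : EuclideanSpace ℝ (Fin 3) → ℝ)
    (hν : ∀ ξ, ν ξ = ∑ j, c j *
      ∫ ξs : EuclideanSpace ℝ (Fin 3),
        Real.exp (-m j * ‖ξs‖ ^ 2 / 2) *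
          (if 2 * Δ j < ‖ξ - ξs‖ ^ 2 then Real.sqrt (‖ξ - ξs‖ ^ 2 - 2 * Δ j) else 0)) :
    ∃ νm νp : ℝ, 0 < νm ∧ νm < νp ∧
      ∀ ξ : EuclideanSpace ℝ (Fin 3),
        νm * (1 + ‖ξ‖) ≤ ν ξ ∧ ν ξ ≤ νp * (1 + ‖ξ‖) := by
  classical
  obtain ⟨j₀, hj₀⟩ := hΔ0
  set A : J → ℝ := fun j => ∫ x : EuclideanSpace ℝ (Fin 3), Real.exp (-m j * ‖x‖ ^ 2 / 2)
    with hA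
  set B : J → ℝ := fun j => ∫ x : EuclideanSpace ℝ (Fin 3),
      Real.exp (-m j * ‖x‖ ^ 2 / 2) * ‖x‖ with hB
  have hApos : ∀ j, 0 < A j := fun j => A_pos (hm j)
  have hBpos : ∀ j, 0 < B j := fun j => B_pos (hm j)
  set D : J → ℝ := fun j => Real.sqrt (2 * |Δ j|) with hD
  have hDnn : ∀ j, 0 ≤ D j := fun j => Real.sqrt_nonneg _
  set K : J → ℝ := fun j => A j * (1 + D j) + B j with hK
  have hKpos : ∀ j, 0 < K j := fun j => by
    have h1 := hApos j; have h2 := hBpos j; have h3 := hDnn j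
    show 0 < A j * (1 + D j) + B j
    nlinarith
  set νm : ℝ := c j₀ * (min (A j₀) (B j₀) / 2) with hνm
  set P : ℝ := ∑ j, c j * K j with hP
  have hνmpos : 0 < νm := by
    have := hc j₀
    have h1 : 0 < min (A j₀) (B j₀) := lt_min (hApos j₀) (hBpos j₀)
    positivity
  have hPpos : 0 ≤ P := Finset.sum_nonneg fun j _ =>
    mul_nonneg (hc j).le (hKpos j).le
  refine ⟨νm, P + νm + 1, hνmpos, by linarith, fun ξ => ?_⟩
  have hξnn : (0:ℝ) ≤ ‖ξ‖ := norm_nonneg ξ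
  -- notation for the integrals T j
  set T : J → ℝ := fun j => ∫ x : EuclideanSpace ℝ (Fin 3),
      Real.exp (-m j * ‖x‖ ^ 2 / 2) *
        (if 2 * Δ j < ‖ξ - x‖ ^ 2 then Real.sqrt (‖ξ - x‖ ^ 2 - 2 * Δ j) else 0) with hT
  have hνξ : ν ξ = ∑ j, c j * T j := hν ξ
  have hTnn : ∀ j, 0 ≤ T j := by
    intro j
    apply integral_nonneg
    intro x
    apply mul_nonneg (Real.exp_nonneg _)
    split
    · exact Real.sqrt_nonneg _
    · exact le_refl 0
  constructor
  · -- lower bound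
    have hT0 : T j₀ = ∫ x : EuclideanSpace ℝ (Fin 3),
        Real.exp (-m j₀ * ‖x‖ ^ 2 / 2) * ‖ξ - x‖ := by
      show (∫ x : EuclideanSpace ℝ (Fin 3),
          Real.exp (-m j₀ * ‖x‖ ^ 2 / 2) *
            (if 2 * Δ j₀ < ‖ξ - x‖ ^ 2 then Real.sqrt (‖ξ - x‖ ^ 2 - 2 * Δ j₀) else 0)) = _
      congr 1
      funext x
      rw [hj₀]
      simp only [mul_zero, sub_zero]
      by_cases h : (0:ℝ) < ‖ξ - x‖ ^ 2
      · rw [if_pos h, Real.sqrt_sq (norm_nonneg _)]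
      · rw [if_neg h]
        have h2 : ‖ξ - x‖ = 0 := by nlinarith [norm_nonneg (ξ - x)]
        rw [h2, mul_zero]
    have hlow : A j₀ * ‖ξ‖ + B j₀
        ≤ 2 * ∫ x : EuclideanSpace ℝ (Fin 3), Real.exp (-m j₀ * ‖x‖ ^ 2 / 2) * ‖ξ - x‖ :=
      lower_est (hm j₀) ξ
    have hsingle : c j₀ * T j₀ ≤ ∑ j, c j * T j := by
      apply Finset.single_le_sum (f := fun j => c j * T j)
        (fun j _ => mul_nonneg (hc j).le (hTnn j)) (Finset.mem_univ j₀)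
    have hmin1 : min (A j₀) (B j₀) ≤ A j₀ := min_le_left _ _
    have hmin2 : min (A j₀) (B j₀) ≤ B j₀ := min_le_right _ _
    have hkey : min (A j₀) (B j₀) / 2 * (1 + ‖ξ‖) ≤ T j₀ := by
      rw [hT0]
      have : min (A j₀) (B j₀) * (1 + ‖ξ‖) ≤ A j₀ * ‖ξ‖ + B j₀ := by nlinarith
      nlinarith [hlow]
    rw [hνξ]
    calc νm * (1 + ‖ξ‖) = c j₀ * (min (A j₀) (B j₀) / 2 * (1 + ‖ξ‖)) := by
          rw [hνm]; ring
      _ ≤ c j₀ * T j₀ := mul_le_mul_of_nonneg_left hkey (hc j₀).le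
      _ ≤ ∑ j, c j * T j := hsingle
  · -- upper bound
    have hup : ∀ j, T j ≤ K j * (1 + ‖ξ‖) := by
      intro j
      have h1 : T j ≤ A j * (‖ξ‖ + D j) + B j := upper_est (hm j) (Δ j) ξ
      have h2 : A j * (‖ξ‖ + D j) + B j ≤ K j * (1 + ‖ξ‖) := by
        show A j * (‖ξ‖ + D j) + B j ≤ (A j * (1 + D j) + B j) * (1 + ‖ξ‖)
        nlinarith [mul_nonneg (mul_nonneg (hApos j).le (hDnn j)) hξnn,
          mul_nonneg (hBpos j).le hξnn, hApos j]
      exact le_trans h1 h2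
    rw [hνξ]
    calc ∑ j, c j * T j ≤ ∑ j, c j * (K j * (1 + ‖ξ‖)) :=
          Finset.sum_le_sum fun j _ => mul_le_mul_of_nonneg_left (hup j) (hc j).le
      _ = P * (1 + ‖ξ‖) := by rw [hP, Finset.sum_mul]; congr 1; funext j; ring
      _ ≤ (P + νm + 1) * (1 + ‖ξ‖) := by nlinarith
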